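/- The complement in X₁ of the image of ℝ ∪ {∞} is not connected: it is the union of the two disjoint nonempty open sets given by the images of the open upper half-plane and the open lower half-plane. -/
import Mathlib

open OnePoint

/-- Identifications `i ∼ 2i` and `−i ∼ −2i` on the Riemann sphere `OnePoint ℂ`. -/
def relEx2₁ : OnePoint ℂ → OnePoint ℂ → Prop := fun a b =>
  (a = (Complex.I : OnePoint ℂ) ∧ b = ((2 * Complex.I : ℂ) : OnePoint ℂ)) ∨
  (a = ((-Complex.I : ℂ) : OnePoint ℂ) ∧ b = ((-(2 * Complex.I) : ℂ) : OnePoint ℂ))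

/-- The subset `ℝ ∪ {∞}` of the Riemann sphere `OnePoint ℂ`. -/
def realCircle : Set (OnePoint ℂ) :=
  {x | (∃ t : ℝ, x = ((t : ℂ) : OnePoint ℂ)) ∨ x = ∞}

/-- The open upper half-plane, viewed inside the Riemann sphere. -/
def upperHalfSphere : Set (OnePoint ℂ) := {x | ∃ z : ℂ, x = (z : OnePoint ℂ) ∧ 0 < z.im}

/-- The open lower half-plane, viewed inside the Riemann sphere. -/
def lowerHalfSphere : Set (OnePoint ℂ) := {x | ∃ z : ℂ, x = (z : OnePoint ℂ) ∧ z.im < 0}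

/-- Sign of the imaginary part, with `∞ ↦ 0`. -/
noncomputable def sgnIm : OnePoint ℂ → ℝ := fun x => Option.elim x 0 (fun z => Real.sign z.im)

lemma sgnIm_coe (z : ℂ) : sgnIm (z : OnePoint ℂ) = Real.sign z.im := rfl

lemma sgnIm_infty : sgnIm ∞ = 0 := rfl

lemma sgnIm_rel : ∀ a b, relEx2₁ a b → sgnIm a = sgnIm b := by
  rintro a b (⟨rfl, rfl⟩ | ⟨rfl, rfl⟩) <;> rw [sgnIm_coe, sgnIm_coe]
  · rw [show Complex.I.im = 1 by simp, show (2 * Complex.I).im = 2 by simp,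
      Real.sign_of_pos one_pos, Real.sign_of_pos (by norm_num : (0:ℝ) < 2)]
  · rw [show (-Complex.I).im = -1 by simp, show (-(2 * Complex.I)).im = -2 by simp,
      Real.sign_of_neg (by norm_num : (-1:ℝ) < 0), Real.sign_of_neg (by norm_num : (-2:ℝ) < 0)]

/-- The sign function descends to the quotient. -/
noncomputable def sgnImQ : Quot relEx2₁ → ℝ := Quot.lift sgnIm sgnIm_rel

lemma mem_upper_iff (x : OnePoint ℂ) : x ∈ upperHalfSphere ↔ sgnIm x = 1 := by
  constructor
  · rintro ⟨z, rfl, hz⟩; rw [sgnIm_coe, Real.sign_of_pos hz]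
  · intro h
    cases x with
    | infty => exact absurd h (by rw [sgnIm_infty]; norm_num)
    | coe z =>
      refine ⟨z, rfl, ?_⟩
      rw [sgnIm_coe] at h
      rcases lt_trichotomy z.im 0 with hlt | heq | hgt
      · rw [Real.sign_of_neg hlt] at h; norm_num at h
      · rw [heq, Real.sign_zero] at h; norm_num at h
      · exact hgt

lemma mem_lower_iff (x : OnePoint ℂ) : x ∈ lowerHalfSphere ↔ sgnIm x = -1 := by
  constructor
  · rintro ⟨z, rfl, hz⟩; rw [sgnIm_coe, Real.sign_of_neg hz]
  · intro h
    cases x with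
    | infty => exact absurd h (by rw [sgnIm_infty]; norm_num)
    | coe z =>
      refine ⟨z, rfl, ?_⟩
      rw [sgnIm_coe] at h
      rcases lt_trichotomy z.im 0 with hlt | heq | hgt
      · exact hlt
      · rw [heq, Real.sign_zero] at h; norm_num at h
      · rw [Real.sign_of_pos hgt] at h; norm_num at h

lemma mem_real_iff (x : OnePoint ℂ) : x ∈ realCircle ↔ sgnIm x = 0 := by
  constructor
  · rintro (⟨t, rfl⟩ | rfl)
    · rw [sgnIm_coe]; simp [Real.sign_eq_zero_iff]
    · exact sgnIm_infty
  · intro h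
    cases x with
    | infty => exact Or.inr rfl
    | coe z =>
      rw [sgnIm_coe, Real.sign_eq_zero_iff] at h
      refine Or.inl ⟨z.re, ?_⟩
      have : (z.re : ℂ) = z := Complex.ext (by simp) (by simp [h])
      rw [this]

lemma preim_im {A : Set (OnePoint ℂ)} {v : ℝ} (hA : ∀ x, x ∈ A ↔ sgnIm x = v) :
    Quot.mk relEx2₁ ⁻¹' (Quot.mk relEx2₁ '' A) = A := by
  ext x
  constructor
  · rintro ⟨y, hy, hxy⟩
    have : sgnIm y = sgnIm x := congrArg sgnImQ hxy
    rw [hA, ← this, ← hA]; exact hy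
  · intro h; exact ⟨x, h, rfl⟩

lemma im_eq {A : Set (OnePoint ℂ)} {v : ℝ} (hA : ∀ x, x ∈ A ↔ sgnIm x = v) :
    Quot.mk relEx2₁ '' A = sgnImQ ⁻¹' {v} := by
  ext q
  constructor
  · rintro ⟨x, hx, rfl⟩; exact (hA x).1 hx
  · intro hq
    obtain ⟨x, rfl⟩ := Quot.exists_rep q
    exact ⟨x, (hA x).2 hq, rfl⟩

lemma upper_open : IsOpen upperHalfSphere := by
  have : upperHalfSphere = ((↑) : ℂ → OnePoint ℂ) '' {z | 0 < z.im} := by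
    ext x; constructor
    · rintro ⟨z, rfl, hz⟩; exact ⟨z, hz, rfl⟩
    · rintro ⟨z, hz, rfl⟩; exact ⟨z, rfl, hz⟩
  rw [this]
  exact isOpenEmbedding_coe.isOpenMap _ (isOpen_lt continuous_const Complex.continuous_im)

lemma lower_open : IsOpen lowerHalfSphere := by
  have : lowerHalfSphere = ((↑) : ℂ → OnePoint ℂ) '' {z | z.im < 0} := by
    ext x; constructor
    · rintro ⟨z, rfl, hz⟩; exact ⟨z, hz, rfl⟩
    · rintro ⟨z, hz, rfl⟩; exact ⟨z, rfl, hz⟩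
  rw [this]
  exact isOpenEmbedding_coe.isOpenMap _ (isOpen_lt Complex.continuous_im continuous_const)

theorem double_cover_statement_10 :
    ¬ IsConnected ((Quot.mk relEx2₁ '' realCircle)ᶜ) ∧
    (Quot.mk relEx2₁ '' realCircle)ᶜ =
      Quot.mk relEx2₁ '' upperHalfSphere ∪ Quot.mk relEx2₁ '' lowerHalfSphere ∧
    Disjoint (Quot.mk relEx2₁ '' upperHalfSphere) (Quot.mk relEx2₁ '' lowerHalfSphere) ∧
    (Quot.mk relEx2₁ '' upperHalfSphere).Nonempty ∧
    (Quot.mk relEx2₁ '' lowerHalfSphere).Nonempty ∧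
    IsOpen (Quot.mk relEx2₁ '' upperHalfSphere) ∧
    IsOpen (Quot.mk relEx2₁ '' lowerHalfSphere) := by
  have hcompl : (Quot.mk relEx2₁ '' realCircle)ᶜ =
      Quot.mk relEx2₁ '' upperHalfSphere ∪ Quot.mk relEx2₁ '' lowerHalfSphere := by
    rw [im_eq mem_real_iff, im_eq mem_upper_iff, im_eq mem_lower_iff]
    ext q
    obtain ⟨x, rfl⟩ := Quot.exists_rep q
    have h : sgnImQ (Quot.mk relEx2₁ x) = sgnIm x := rfl
    simp only [Set.mem_compl_iff, Set.mem_preimage, Set.mem_singleton_iff, Set.mem_union, h]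
    cases x with
    | infty => simp [sgnIm_infty]
    | coe z =>
      rw [sgnIm_coe]
      rcases Real.sign_apply_eq z.im with h1 | h1 | h1 <;> rw [h1] <;> norm_num
  have hdisj : Disjoint (Quot.mk relEx2₁ '' upperHalfSphere)
      (Quot.mk relEx2₁ '' lowerHalfSphere) := by
    rw [Set.disjoint_left]
    rintro q hu hl
    rw [im_eq mem_upper_iff] at hu
    rw [im_eq mem_lower_iff] at hl
    simp only [Set.mem_preimage, Set.mem_singleton_iff] at hu hl
    rw [hu] at hl; norm_num at hl
  have hIu : Quot.mk relEx2₁ (Complex.I : OnePoint ℂ) ∈ Quot.mk relEx2₁ '' upperHalfSphere :=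
    ⟨_, ⟨Complex.I, rfl, by simp⟩, rfl⟩
  have hIl : Quot.mk relEx2₁ ((-Complex.I : ℂ) : OnePoint ℂ) ∈
      Quot.mk relEx2₁ '' lowerHalfSphere :=
    ⟨_, ⟨-Complex.I, rfl, by simp⟩, rfl⟩
  have hou : IsOpen (Quot.mk relEx2₁ '' upperHalfSphere) := by
    rw [← isQuotientMap_quot_mk.isOpen_preimage, preim_im mem_upper_iff]
    exact upper_open
  have hol : IsOpen (Quot.mk relEx2₁ '' lowerHalfSphere) := by
    rw [← isQuotientMap_quot_mk.isOpen_preimage, preim_im mem_lower_iff]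
    exact lower_open
  refine ⟨?_, hcompl, hdisj, ⟨_, hIu⟩, ⟨_, hIl⟩, hou, hol⟩
  rintro ⟨-, hpre⟩
  obtain ⟨q, hq1, hq2⟩ := hpre _ _ hou hol (by rw [hcompl])
    ⟨_, by rw [hcompl]; exact Or.inl hIu, hIu⟩
    ⟨_, by rw [hcompl]; exact Or.inr hIl, hIl⟩
  exact Set.disjoint_left.mp hdisj hq2.1 hq2.2
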